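/- Let Y be a compact metric space and let 𝒜 ⊆ C(Y) be the countable dense subalgebra constructed from a countable dense set and rational-radius bump functions (closed under multiplication by the chosen bump functions ρ_{(K,U)}). Then for every non-negative f ∈ C(Y) and every δ > 0 there exists f_0 ∈ 𝒜 with ‖f − f_0‖_∞ < δ and supp(f_0) ⊆ supp(f), where supp(g) = {y ∈ Y : g(y) ≠ 0}. -/
import Mathlib


/-- If `A` is a dense subset of `C(Y, ℝ)` closed under multiplication by bump functions
(one for each compact-open pair), then every non-negative continuous function can be
approximated by elements of `A` without enlarging the support. -/
theorem stmt4 {Y : Type*} [MetricSpace Y] [CompactSpace Y]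
    (A : Set C(Y, ℝ)) (hA : Countable A)
    (hsub : ∀ f ∈ A, ∀ g ∈ A, f + g ∈ A ∧ f * g ∈ A)
    (hdense : Dense A)
    (hbump : ∀ K U : Set Y, IsCompact K → IsOpen U → K ⊆ U →
      ∃ ρ : C(Y, ℝ), (∀ y, 0 ≤ ρ y ∧ ρ y ≤ 1) ∧ (∀ y ∈ K, ρ y = 1) ∧
        (∀ y ∉ U, ρ y = 0) ∧ ∀ f ∈ A, ρ * f ∈ A) :
    ∀ f : C(Y, ℝ), (∀ y, 0 ≤ f y) → ∀ δ : ℝ, 0 < δ →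
      ∃ f₀ ∈ A, ‖f - f₀‖ < δ ∧ {y | f₀ y ≠ 0} ⊆ {y | f y ≠ 0} := by
  intro f hf δ hδ
  set K : Set Y := {y | δ/3 ≤ f y} with hK
  set U : Set Y := {y | f y ≠ 0} with hU
  have hKc : IsCompact K := (isClosed_le continuous_const f.continuous).isCompact
  have hUo : IsOpen U := isOpen_ne_fun f.continuous continuous_const
  have hKU : K ⊆ U := fun y hy => by
    have : (0:ℝ) < f y := lt_of_lt_of_le (by linarith) hy
    exact ne_of_gt this
  obtain ⟨ρ, hρ01, hρK, hρU, hρA⟩ := hbump K U hKc hUo hKU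
  obtain ⟨g, hgA, hgd⟩ := hdense.exists_dist_lt f (div_pos hδ (by norm_num) : (0:ℝ) < δ/3)
  refine ⟨ρ * g, hρA g hgA, ?_, ?_⟩
  · rw [ContinuousMap.norm_lt_iff _ hδ]
    intro y
    have hfg : |f y - g y| < δ/3 := by
      have := ContinuousMap.norm_coe_le_norm (f - g) y
      simp only [ContinuousMap.sub_apply, Real.norm_eq_abs] at this
      calc |f y - g y| ≤ ‖f - g‖ := this
        _ = dist f g := (dist_eq_norm f g).symm
        _ < δ/3 := hgd
    obtain ⟨hρ0, hρ1⟩ := hρ01 y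
    simp only [ContinuousMap.sub_apply, ContinuousMap.mul_apply, Real.norm_eq_abs]
    have key : |f y - ρ y * g y| ≤ (1 - ρ y) * f y + ρ y * |f y - g y| := by
      have : f y - ρ y * g y = (1 - ρ y) * f y + ρ y * (f y - g y) := by ring
      rw [this]
      calc |(1 - ρ y) * f y + ρ y * (f y - g y)|
          ≤ |(1 - ρ y) * f y| + |ρ y * (f y - g y)| := abs_add_le _ _
        _ = (1 - ρ y) * f y + ρ y * |f y - g y| := by
            rw [abs_mul, abs_mul, abs_of_nonneg (by linarith : (0:ℝ) ≤ 1 - ρ y),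
              abs_of_nonneg (hf y), abs_of_nonneg hρ0]
    by_cases hy : y ∈ K
    · have hρy : ρ y = 1 := hρK y hy
      calc |f y - ρ y * g y| ≤ (1 - ρ y) * f y + ρ y * |f y - g y| := key
        _ = |f y - g y| := by rw [hρy]; ring
        _ < δ/3 := hfg
        _ < δ := by linarith
    · have hfy : f y < δ/3 := lt_of_not_ge hy
      have h1 : (1 - ρ y) * f y ≤ f y := by nlinarith [hf y]
      have h2 : ρ y * |f y - g y| ≤ |f y - g y| := by nlinarith [abs_nonneg (f y - g y)]
      calc |f y - ρ y * g y| ≤ (1 - ρ y) * f y + ρ y * |f y - g y| := key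
        _ ≤ f y + |f y - g y| := add_le_add h1 h2
        _ < δ/3 + δ/3 := add_lt_add hfy hfg
        _ < δ := by linarith
  · intro y hy
    simp only [Set.mem_setOf_eq, ContinuousMap.mul_apply] at hy ⊢
    by_contra h
    have : y ∉ U := by simpa [hU] using h
    exact hy (by rw [hρU y this]; ring)
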